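/- arXiv:2504.21636 — 2 statements merged into one kernel-verified Lean document; each statement's English description precedes it below -/
import Mathlib

section
/- Let n ≥ 1, let a_i := Z^{⊗i} ⊗ σ⁻ ⊗ I^{⊗(n−1−i)} be the n-qubit Jordan–Wigner annihilation operators, and let i < j < n and c ∈ ℂ. Then the hopping term satisfies c·(a_i)† a_j + conj(c)·(a_j)† a_i = ½ [ Re(c)·(X_{{i}}X_{{j}} + Y_{{i}}Y_{{j}}) + Im(c)·(Y_{{i}}X_{{j}} − X_{{i}}Y_{{j}}) ] · Z_{[i+1,j−1]}, where Z_{[i+1,j−1]} := Z_{Ico(i+1,j)} is the product of Pauli Z's on qubits i+1,…,j−1. Moreover each of the four Pauli strings X_{{i}}X_{{j}}Z_{Ico(i+1,j)}, Y_{{i}}Y_{{j}}Z_{Ico(i+1,j)}, Y_{{i}}X_{{j}}Z_{Ico(i+1,j)}, X_{{i}}Y_{{j}}Z_{Ico(i+1,j)} acts nontrivially on exactly j − i + 1 tensor factors. -/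
open Matrix Finset
open scoped symmDiff

namespace FQ

/-- Pauli X. -/
noncomputable def X : Matrix (ZMod 2) (ZMod 2) ℂ := !![0, 1; 1, 0]

/-- Pauli Y. -/
noncomputable def Y : Matrix (ZMod 2) (ZMod 2) ℂ := !![0, -Complex.I; Complex.I, 0]

/-- Pauli Z. -/
noncomputable def Z : Matrix (ZMod 2) (ZMod 2) ℂ := !![1, 0; 0, -1]

/-- Tensor product `M 0 ⊗ M 1 ⊗ ⋯ ⊗ M (n-1)` of a family of single-qubit operators, as a
`2^n × 2^n` matrix indexed by functions `Fin n → ZMod 2`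
(the identification of `(ℂ²)^⊗n` with `ℂ^(2^n)`). -/
noncomputable def tens {n : ℕ} (M : Fin n → Matrix (ZMod 2) (ZMod 2) ℂ) :
    Matrix (Fin n → ZMod 2) (Fin n → ZMod 2) ℂ :=
  Matrix.of fun f g => ∏ i, M i (f i) (g i)

/-- The lowering operator `σ⁻ = (X + iY)/2`. -/
noncomputable def σm : Matrix (ZMod 2) (ZMod 2) ℂ := !![0, 1; 0, 0]

/-- The `n`-qubit Jordan–Wigner annihilation operators: `ann n i = Z^⊗i ⊗ σ⁻ ⊗ I^⊗(n-1-i)`. -/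
noncomputable def ann (n i : ℕ) : Matrix (Fin n → ZMod 2) (Fin n → ZMod 2) ℂ :=
  tens fun j => if (j : ℕ) < i then Z else if (j : ℕ) = i then σm else 1

/-- The Pauli string `X_S`: Pauli `X` on each tensor factor in `S`, identity elsewhere. -/
noncomputable def Xstr {n : ℕ} (S : Finset (Fin n)) :
    Matrix (Fin n → ZMod 2) (Fin n → ZMod 2) ℂ :=
  tens fun j => if j ∈ S then X else 1

/-- The Pauli string `Y_S`: Pauli `Y` on each tensor factor in `S`, identity elsewhere. -/
noncomputable def Ystr {n : ℕ} (S : Finset (Fin n)) :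
    Matrix (Fin n → ZMod 2) (Fin n → ZMod 2) ℂ :=
  tens fun j => if j ∈ S then Y else 1

/-- The Pauli string `Z_S`: Pauli `Z` on each tensor factor in `S`, identity elsewhere. -/
noncomputable def Zstr {n : ℕ} (S : Finset (Fin n)) :
    Matrix (Fin n → ZMod 2) (Fin n → ZMod 2) ℂ :=
  tens fun j => if j ∈ S then Z else 1

/-- The single-qubit factors of the Pauli string `A_{i} B_{j} Z_{[i+1,j-1]}` appearing in the
Jordan–Wigner image of a hopping term: `A` on factor `i`, `B` on factor `j`, `Z` strictly
between `i` and `j`, identity elsewhere. -/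
noncomputable def hopFam {n : ℕ} (i j : Fin n) (A B : Matrix (ZMod 2) (ZMod 2) ℂ) :
    Fin n → Matrix (ZMod 2) (ZMod 2) ℂ :=
  fun k => if k = i then A else if k = j then B else if i < k ∧ k < j then Z else 1

/- ## auxiliary lemmas -/


lemma sum_zmod2 (f : ZMod 2 → ℂ) : ∑ x : ZMod 2, f x = f 0 + f 1 := Fin.sum_univ_two f

lemma tens_apply {n : ℕ} (M : Fin n → Matrix (ZMod 2) (ZMod 2) ℂ) (f g : Fin n → ZMod 2) :
    tens M f g = ∏ i, M i (f i) (g i) := rfl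

lemma tens_mul {n : ℕ} (M N : Fin n → Matrix (ZMod 2) (ZMod 2) ℂ) :
    tens M * tens N = tens fun k => M k * N k := by
  ext f g
  simp only [Matrix.mul_apply, tens_apply]
  rw [show (∏ k, ∑ x : ZMod 2, M k (f k) x * N k x (g k)) =
      ∑ h ∈ Fintype.piFinset (fun _ : Fin n => (univ : Finset (ZMod 2))),
        ∏ k, M k (f k) (h k) * N k (h k) (g k) from Finset.prod_univ_sum _ _]
  simp [Fintype.piFinset_univ, Finset.prod_mul_distrib]

lemma tens_conjT {n : ℕ} (M : Fin n → Matrix (ZMod 2) (ZMod 2) ℂ) :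
    (tens M)ᴴ = tens fun k => (M k)ᴴ := by
  ext f g
  simp [Matrix.conjTranspose_apply, tens_apply, star_prod]

@[simp] lemma X00 : X 0 0 = 0 := rfl
@[simp] lemma X01 : X 0 1 = 1 := rfl
@[simp] lemma X10 : X 1 0 = 1 := rfl
@[simp] lemma X11 : X 1 1 = 0 := rfl
@[simp] lemma Y00 : Y 0 0 = 0 := rfl
@[simp] lemma Y01 : Y 0 1 = -Complex.I := rfl
@[simp] lemma Y10 : Y 1 0 = Complex.I := rfl
@[simp] lemma Y11 : Y 1 1 = 0 := rfl
@[simp] lemma Z00 : Z 0 0 = 1 := rfl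
@[simp] lemma Z01 : Z 0 1 = 0 := rfl
@[simp] lemma Z10 : Z 1 0 = 0 := rfl
@[simp] lemma Z11 : Z 1 1 = -1 := rfl
@[simp] lemma σm00 : σm 0 0 = 0 := rfl
@[simp] lemma σm01 : σm 0 1 = 1 := rfl
@[simp] lemma σm10 : σm 1 0 = 0 := rfl
@[simp] lemma σm11 : σm 1 1 = 0 := rfl
lemma z2 (a : ZMod 2) : a = 0 ∨ a = 1 := by revert a; decide

lemma mZZ : Z * Z = 1 := by
  ext a b
  rcases z2 a with rfl | rfl <;> rcases z2 b with rfl | rfl <;>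
    simp [Matrix.mul_apply, sum_zmod2, Matrix.one_apply]

lemma mZdag : Zᴴ = Z := by
  ext a b; rcases z2 a with rfl | rfl <;> rcases z2 b with rfl | rfl <;> simp [Matrix.conjTranspose_apply]

lemma mSdagZ : σmᴴ * Z = σmᴴ := by
  ext a b
  rcases z2 a with rfl | rfl <;> rcases z2 b with rfl | rfl <;>
    simp [Matrix.mul_apply, sum_zmod2, Matrix.conjTranspose_apply]

lemma mZS : Z * σm = σm := by
  ext a b
  rcases z2 a with rfl | rfl <;> rcases z2 b with rfl | rfl <;>
    simp [Matrix.mul_apply, sum_zmod2]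

lemma Xne1 : X ≠ 1 := by
  intro h
  have := Matrix.ext_iff.2 h 0 1
  simp [Matrix.one_apply] at this

lemma Yne1 : Y ≠ 1 := by
  intro h
  have := Matrix.ext_iff.2 h 0 1
  simp [Matrix.one_apply, Complex.ext_iff] at this

lemma Zne1 : Z ≠ 1 := by
  intro h
  have := Matrix.ext_iff.2 h 1 1
  simp [Matrix.one_apply, Complex.ext_iff] at this
  norm_num at this

lemma key2 (c : ℂ) (a b a' b' : ZMod 2) :
    c * (σmᴴ a b * σm a' b') + (starRingEnd ℂ) c * (σm a b * σmᴴ a' b') =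
    1/2 * ((c.re : ℂ) * (X a b * X a' b' + Y a b * Y a' b') +
      (c.im : ℂ) * (Y a b * X a' b' - X a b * Y a' b')) := by
  rcases z2 a with rfl | rfl <;> rcases z2 b with rfl | rfl <;> rcases z2 a' with rfl | rfl <;> rcases z2 b' with rfl | rfl <;>
    simp [Matrix.conjTranspose_apply, Complex.ext_iff] <;>
    constructor <;> ring

lemma ann_dag_mul {n : ℕ} (i j : Fin n) (hij : i < j) :
    (ann n i)ᴴ * ann n j = tens (hopFam i j σmᴴ σm) := by
  rw [ann, ann, tens_conjT, tens_mul]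
  refine congrArg tens ?_
  funext k
  have hijn : (i : ℕ) < (j : ℕ) := hij
  by_cases h1 : k = i
  · subst h1
    simp [hopFam, lt_irrefl, hijn, mSdagZ]
  · by_cases h2 : k = j
    · subst h2
      have h3 : ¬ ((k : ℕ) < (i : ℕ)) := by omega
      have h4 : ¬ ((k : ℕ) = (i : ℕ)) := by omega
      simp [hopFam, h1, h3, h4, lt_irrefl]
    · have hki : (k : ℕ) ≠ (i : ℕ) := fun h => h1 (Fin.eq_of_val_eq h)
      have hkj : (k : ℕ) ≠ (j : ℕ) := fun h => h2 (Fin.eq_of_val_eq h)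
      by_cases h3 : (k : ℕ) < (i : ℕ)
      · have h4 : (k : ℕ) < (j : ℕ) := by omega
        have h5 : ¬ (i < k ∧ k < j) := by
          rintro ⟨h6, -⟩; exact absurd (Fin.lt_def.1 h6) (by omega)
        simp [hopFam, h1, h2, h3, h4, h5, mZdag, mZZ]
      · by_cases h4 : (k : ℕ) < (j : ℕ)
        · have h5 : i < k ∧ k < j := ⟨Fin.lt_def.2 (by omega), Fin.lt_def.2 (by omega)⟩
          simp [hopFam, h1, h2, h3, h4, h5, hki]
        · have h5 : ¬ (i < k ∧ k < j) := by
            rintro ⟨-, h6⟩; exact absurd (Fin.lt_def.1 h6) (by omega)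
          simp [hopFam, h1, h2, h3, h4, h5, hki, hkj]

lemma ann_dag_mul' {n : ℕ} (i j : Fin n) (hij : i < j) :
    (ann n j)ᴴ * ann n i = tens (hopFam i j σm σmᴴ) := by
  rw [ann, ann, tens_conjT, tens_mul]
  refine congrArg tens ?_
  funext k
  have hijn : (i : ℕ) < (j : ℕ) := hij
  by_cases h1 : k = i
  · subst h1
    simp [hopFam, lt_irrefl, hijn, mZdag, mZS]
  · by_cases h2 : k = j
    · subst h2
      have h3 : ¬ ((k : ℕ) < (i : ℕ)) := by omega
      have h4 : ¬ ((k : ℕ) = (i : ℕ)) := by omega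
      simp [hopFam, h1, h3, h4, lt_irrefl]
    · have hki : (k : ℕ) ≠ (i : ℕ) := fun h => h1 (Fin.eq_of_val_eq h)
      have hkj : (k : ℕ) ≠ (j : ℕ) := fun h => h2 (Fin.eq_of_val_eq h)
      by_cases h3 : (k : ℕ) < (i : ℕ)
      · have h4 : (k : ℕ) < (j : ℕ) := by omega
        have h5 : ¬ (i < k ∧ k < j) := by
          rintro ⟨h6, -⟩; exact absurd (Fin.lt_def.1 h6) (by omega)
        simp [hopFam, h1, h2, h3, h4, h5, mZdag, mZZ]
      · by_cases h4 : (k : ℕ) < (j : ℕ)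
        · have h5 : i < k ∧ k < j := ⟨Fin.lt_def.2 (by omega), Fin.lt_def.2 (by omega)⟩
          simp [hopFam, h1, h2, h3, h4, h5, hki, mZdag]
        · have h5 : ¬ (i < k ∧ k < j) := by
            rintro ⟨-, h6⟩; exact absurd (Fin.lt_def.1 h6) (by omega)
          simp [hopFam, h1, h2, h3, h4, h5, hki, hkj]

lemma str_mul {n : ℕ} (i j : Fin n) (hij : i < j) (A B : Matrix (ZMod 2) (ZMod 2) ℂ) :
    tens (fun k => if k ∈ ({i} : Finset (Fin n)) then A else 1) *
      tens (fun k => if k ∈ ({j} : Finset (Fin n)) then B else 1) *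
      tens (fun k => if k ∈ Finset.univ.filter (fun k => i < k ∧ k < j) then Z else 1) =
      tens (hopFam i j A B) := by
  rw [tens_mul, tens_mul]
  refine congrArg tens ?_
  funext k
  have hne : i ≠ j := ne_of_lt hij
  simp only [Finset.mem_singleton, Finset.mem_filter, Finset.mem_univ, true_and, hopFam]
  by_cases h1 : k = i
  · subst h1
    simp [hne, lt_irrefl]
  · by_cases h2 : k = j
    · subst h2
      simp [h1, lt_irrefl, hne.symm]
    · by_cases h3 : i < k ∧ k < j
      · simp [h1, h2, h3]
      · simp [h1, h2, h3]


/-- the Jordan–Wigner image of the hopping term `c a_i† a_j + c̄ a_j† a_i` is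
`½ [Re(c)(X_i X_j + Y_i Y_j) + Im(c)(Y_i X_j − X_i Y_j)] Z_{[i+1,j−1]}`, and each of the four
Pauli strings `X_i X_j Z_{[i+1,j−1]}`, `Y_i Y_j Z_{[i+1,j−1]}`, `Y_i X_j Z_{[i+1,j−1]}`,
`X_i Y_j Z_{[i+1,j−1]}` acts nontrivially on exactly `j − i + 1` tensor factors. -/
theorem jordan_wigner_hopping_term (n : ℕ) (hn : 1 ≤ n) (i j : Fin n) (hij : i < j) (c : ℂ) :
    c • ((ann n i)ᴴ * ann n j) + (starRingEnd ℂ c) • ((ann n j)ᴴ * ann n i) =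
      (1 / 2 : ℂ) •
        (((c.re : ℂ) • (Xstr {i} * Xstr {j} + Ystr {i} * Ystr {j}) +
          (c.im : ℂ) • (Ystr {i} * Xstr {j} - Xstr {i} * Ystr {j})) *
          Zstr (Finset.univ.filter fun k => i < k ∧ k < j)) ∧
    Xstr {i} * Xstr {j} * Zstr (Finset.univ.filter fun k => i < k ∧ k < j) =
      tens (hopFam i j X X) ∧
    Ystr {i} * Ystr {j} * Zstr (Finset.univ.filter fun k => i < k ∧ k < j) =
      tens (hopFam i j Y Y) ∧
    Ystr {i} * Xstr {j} * Zstr (Finset.univ.filter fun k => i < k ∧ k < j) =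
      tens (hopFam i j Y X) ∧
    Xstr {i} * Ystr {j} * Zstr (Finset.univ.filter fun k => i < k ∧ k < j) =
      tens (hopFam i j X Y) ∧
    (∀ A ∈ ({X, Y} : Set (Matrix (ZMod 2) (ZMod 2) ℂ)),
      ∀ B ∈ ({X, Y} : Set (Matrix (ZMod 2) (ZMod 2) ℂ)),
      (Finset.univ.filter fun k => hopFam i j A B k ≠ 1).card = (j : ℕ) - (i : ℕ) + 1) := by
  have hijn : (i : ℕ) < (j : ℕ) := hij
  have eXX : Xstr {i} * Xstr {j} * Zstr (Finset.univ.filter fun k => i < k ∧ k < j) =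
      tens (hopFam i j X X) := str_mul i j hij X X
  have eYY : Ystr {i} * Ystr {j} * Zstr (Finset.univ.filter fun k => i < k ∧ k < j) =
      tens (hopFam i j Y Y) := str_mul i j hij Y Y
  have eYX : Ystr {i} * Xstr {j} * Zstr (Finset.univ.filter fun k => i < k ∧ k < j) =
      tens (hopFam i j Y X) := str_mul i j hij Y X
  have eXY : Xstr {i} * Ystr {j} * Zstr (Finset.univ.filter fun k => i < k ∧ k < j) =
      tens (hopFam i j X Y) := str_mul i j hij X Y
  refine ⟨?_, eXX, eYY, eYX, eXY, ?_⟩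
  · rw [ann_dag_mul i j hij, ann_dag_mul' i j hij, add_mul, smul_mul_assoc, smul_mul_assoc,
      add_mul, sub_mul, eXX, eYY, eYX, eXY]
    ext f g
    simp only [Matrix.add_apply, Matrix.smul_apply, Matrix.sub_apply, smul_eq_mul, tens_apply]
    have split : ∀ (A B : Matrix (ZMod 2) (ZMod 2) ℂ),
        (∏ k, hopFam i j A B k (f k) (g k)) =
        A (f i) (g i) * B (f j) (g j) *
          ∏ k ∈ Finset.univ \ {i, j}, hopFam i j 1 1 k (f k) (g k) := by
      intro A B
      rw [← Finset.prod_sdiff (Finset.subset_univ ({i, j} : Finset (Fin n))),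
        Finset.prod_pair (ne_of_lt hij)]
      have hrest : ∀ k ∈ Finset.univ \ ({i, j} : Finset (Fin n)),
          hopFam i j A B k (f k) (g k) = hopFam i j 1 1 k (f k) (g k) := by
        intro k hk
        simp only [Finset.mem_sdiff, Finset.mem_insert, Finset.mem_singleton] at hk
        push_neg at hk
        simp [hopFam, hk.2.1, hk.2.2]
      rw [Finset.prod_congr rfl hrest]
      have hi : hopFam i j A B i = A := by simp [hopFam]
      have hj : hopFam i j A B j = B := by simp [hopFam, (ne_of_lt hij).symm]
      rw [hi, hj]; ring
    rw [split, split, split, split, split, split]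
    have key := key2 c (f i) (g i) (f j) (g j)
    set P := ∏ k ∈ Finset.univ \ ({i, j} : Finset (Fin n)), hopFam i j 1 1 k (f k) (g k) with hP
    linear_combination P * key
  · intro A hA B hB
    simp only [Set.mem_insert_iff, Set.mem_singleton_iff] at hA hB
    have hA1 : A ≠ 1 := by rcases hA with rfl | rfl; exacts [Xne1, Yne1]
    have hB1 : B ≠ 1 := by rcases hB with rfl | rfl; exacts [Xne1, Yne1]
    have hfilter : (Finset.univ.filter fun k => hopFam i j A B k ≠ 1) = Finset.Icc i j := by
      ext k
      simp only [Finset.mem_filter, Finset.mem_univ, true_and, Finset.mem_Icc]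
      simp only [hopFam]
      by_cases h1 : k = i
      · subst h1; simp [hA1, le_of_lt hij]
      · by_cases h2 : k = j
        · subst h2; simp [h1, hB1, le_of_lt hij]
        · by_cases h3 : i < k ∧ k < j
          · simp [h1, h2, h3, Zne1, le_of_lt h3.1, le_of_lt h3.2]
          · rw [if_neg h1, if_neg h2, if_neg h3]
            simp only [ne_eq, not_true_eq_false, false_iff]
            rintro ⟨hik, hkj⟩
            exact h3 ⟨lt_of_le_of_ne hik (Ne.symm h1), lt_of_le_of_ne hkj h2⟩
    rw [hfilter, Fin.card_Icc]
    omega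

end FQ
end

section
/- Let n ≥ 1, let Γ_0,…,Γ_{2n−1} be the n-qubit Jordan–Wigner Majorana operators (Γ_{2i} := Z^{⊗i} ⊗ X ⊗ I^{⊗(n−1−i)}, Γ_{2i+1} := Z^{⊗i} ⊗ Y ⊗ I^{⊗(n−1−i)}), let I ⊆ {0,…,n−1}, and on (ℂ²)^{⊗(n+1)} define S := Z_I ⊗ Z and μ_k := Γ_k ⊗ X if ⌊k/2⌋ ∈ I, μ_k := Γ_k ⊗ I₂ otherwise. Then there exists a linear isometry V : ℂ^{2^n} → ℂ^{2^{n+1}} (i.e. V† V = I_{2^n}) such that V V† = ½(I + S) and μ_k V = V Γ_k for every k ∈ {0,…,2n−1}. In particular, the +1 eigenspace of S has dimension 2^n, is invariant under every μ_k, and on it the μ_k realize a copy of the Jordan–Wigner Majorana operators. -/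
open Matrix Finset
open scoped symmDiff

namespace FQ

/-- The `n`-qubit Jordan–Wigner Majorana operators:
`gamma n (2i) = Z^⊗i ⊗ X ⊗ I^⊗(n-1-i)` and `gamma n (2i+1) = Z^⊗i ⊗ Y ⊗ I^⊗(n-1-i)`. -/
noncomputable def gamma (n k : ℕ) : Matrix (Fin n → ZMod 2) (Fin n → ZMod 2) ℂ :=
  tens fun j => if (j : ℕ) < k / 2 then Z
    else if (j : ℕ) = k / 2 then (if k % 2 = 0 then X else Y) else 1

/-- The operator `A ⊗ M` on `(ℂ²)^⊗(n+1)`: `A` on the first `n` qubits and the single-qubit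
operator `M` on the ancilla qubit. -/
noncomputable def extend {n : ℕ} (A : Matrix (Fin n → ZMod 2) (Fin n → ZMod 2) ℂ)
    (M : Matrix (ZMod 2) (ZMod 2) ℂ) :
    Matrix (Fin (n + 1) → ZMod 2) (Fin (n + 1) → ZMod 2) ℂ :=
  Matrix.of fun f g =>
    A (fun j => f j.castSucc) (fun j => g j.castSucc) * M (f (Fin.last n)) (g (Fin.last n))

/-- The stabilizer `S = Z_I ⊗ Z` on `(ℂ²)^⊗(n+1)`: Pauli `Z` on each qubit in `I`, identity on
the other first-`n` qubits, and `Z` on the ancilla. -/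
noncomputable def stab (n : ℕ) (I : Finset (Fin n)) :
    Matrix (Fin (n + 1) → ZMod 2) (Fin (n + 1) → ZMod 2) ℂ :=
  extend (Zstr I) Z

/-- The modified Majorana operators `μ_k = Γ_k ⊗ X` if `⌊k/2⌋ ∈ I` and `μ_k = Γ_k ⊗ I₂`
otherwise. -/
noncomputable def mu (n : ℕ) (I : Finset (Fin n)) (k : ℕ) :
    Matrix (Fin (n + 1) → ZMod 2) (Fin (n + 1) → ZMod 2) ℂ :=
  if h : k / 2 < n then
    (if (⟨k / 2, h⟩ : Fin n) ∈ I then extend (gamma n k) X else extend (gamma n k) 1)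
  else extend (gamma n k) 1

def chi (c : ZMod 2) : ℂ := if c = 0 then 1 else -1

lemma zmod2_cases (x : ZMod 2) : x = 0 ∨ x = 1 := by revert x; decide

lemma zmod2_one_ne : (1 : ZMod 2) ≠ 0 := by decide

lemma zmod2_one_add : (1 : ZMod 2) + 1 = 0 := by decide

lemma Z_apply (a b : ZMod 2) : Z a b = if a = b then chi a else 0 := by
  rcases zmod2_cases a with rfl | rfl <;> rcases zmod2_cases b with rfl | rfl <;> simp [chi, zmod2_one_ne.symm] <;> rfl

lemma X_apply (a b : ZMod 2) : X a b = if a = b + 1 then 1 else 0 := by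
  rcases zmod2_cases a with rfl | rfl <;> rcases zmod2_cases b with rfl | rfl <;> simp [zmod2_one_ne.symm, zmod2_one_add] <;> rfl

lemma X_ne_zero {a b : ZMod 2} (h : X a b ≠ 0) : a = b + 1 := by
  rcases zmod2_cases a with rfl | rfl <;> rcases zmod2_cases b with rfl | rfl <;> simp [zmod2_one_ne.symm, zmod2_one_add] <;> exact h rfl

lemma Y_ne_zero {a b : ZMod 2} (h : Y a b ≠ 0) : a = b + 1 := by
  rcases zmod2_cases a with rfl | rfl <;> rcases zmod2_cases b with rfl | rfl <;> simp [zmod2_one_ne.symm, zmod2_one_add] <;> exact h rfl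

lemma Z_ne_zero {a b : ZMod 2} (h : Z a b ≠ 0) : a = b := by
  rcases zmod2_cases a with rfl | rfl <;> rcases zmod2_cases b with rfl | rfl <;> simp [zmod2_one_ne.symm, zmod2_one_ne] <;> exact h rfl

lemma one_ne_zero' {a b : ZMod 2} (h : (1 : Matrix (ZMod 2) (ZMod 2) ℂ) a b ≠ 0) : a = b := by
  by_contra hne; exact h (Matrix.one_apply_ne hne)

lemma one_apply' (a b : ZMod 2) :
    (1 : Matrix (ZMod 2) (ZMod 2) ℂ) a b = if a = b then 1 else 0 := Matrix.one_apply

lemma chi_add (x y : ZMod 2) : chi (x + y) = chi x * chi y := by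
  rcases zmod2_cases x with rfl | rfl <;> rcases zmod2_cases y with rfl | rfl <;> simp [chi, zmod2_one_ne, zmod2_one_add]

lemma chi_sum {ι : Type*} (s : Finset ι) (a : ι → ZMod 2) :
    ∏ i ∈ s, chi (a i) = chi (∑ i ∈ s, a i) := by
  induction s using Finset.cons_induction with
  | empty => simp [chi]
  | cons i s hi ih => rw [Finset.prod_cons, Finset.sum_cons, chi_add, ih]

lemma half_lemma (x y : ZMod 2) : (1/2 : ℂ) * (1 + chi x * chi y) = if y = x then 1 else 0 := by
  rcases zmod2_cases x with rfl | rfl <;> rcases zmod2_cases y with rfl | rfl <;> norm_num [chi, zmod2_one_ne, zmod2_one_ne.symm]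

lemma Zstr_apply {n : ℕ} (I : Finset (Fin n)) (a b : Fin n → ZMod 2) :
    Zstr I a b = if a = b then chi (∑ i ∈ I, a i) else 0 := by
  unfold Zstr tens
  by_cases h : a = b
  · subst h
    rw [if_pos rfl, Matrix.of_apply]
    have h1 : ∀ i : Fin n, (if i ∈ I then Z else 1) (a i) (a i)
        = if i ∈ I then chi (a i) else 1 := by
      intro i; split_ifs with hi
      · rw [Z_apply, if_pos rfl]
      · exact Matrix.one_apply_eq _
    rw [Finset.prod_congr rfl fun i _ => h1 i, Finset.prod_ite_mem, Finset.univ_inter,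
      chi_sum]
  · rw [if_neg h, Matrix.of_apply]
    obtain ⟨i, hi⟩ := Function.ne_iff.mp h
    refine Finset.prod_eq_zero (Finset.mem_univ i) ?_
    show (if i ∈ I then Z else 1) (a i) (b i) = 0
    split_ifs with hmem
    · rw [Z_apply, if_neg hi]
    · exact Matrix.one_apply_ne hi

lemma gamma_flip {n k : ℕ} (hk : k / 2 < n) {a b : Fin n → ZMod 2}
    (h : gamma n k a b ≠ 0) (j : Fin n) :
    a j = b j + if (j : ℕ) = k / 2 then 1 else 0 := by
  have hf : ∀ i : Fin n, (if (i : ℕ) < k / 2 then Z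
      else if (i : ℕ) = k / 2 then (if k % 2 = 0 then X else Y) else 1) (a i) (b i) ≠ 0 := by
    intro i hi0
    exact h (Finset.prod_eq_zero (Finset.mem_univ i) hi0)
  have hj := hf j
  by_cases hje : (j : ℕ) = k / 2
  · rw [if_pos hje]
    rw [if_neg (by omega), if_pos hje] at hj
    by_cases hk2 : k % 2 = 0
    · rw [if_pos hk2] at hj; exact X_ne_zero hj
    · rw [if_neg hk2] at hj; exact Y_ne_zero hj
  · rw [if_neg hje, add_zero]
    by_cases hlt : (j : ℕ) < k / 2
    · rw [if_pos hlt] at hj; exact Z_ne_zero hj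
    · rw [if_neg hlt, if_neg hje] at hj; exact one_ne_zero' hj

lemma sum_flip {n : ℕ} (I : Finset (Fin n)) {a b : Fin n → ZMod 2} (m : Fin n)
    (h : ∀ j, a j = b j + if j = m then 1 else 0) :
    ∑ i ∈ I, a i = (∑ i ∈ I, b i) + if m ∈ I then 1 else 0 := by
  simp only [h]
  rw [Finset.sum_add_distrib, Finset.sum_ite_eq' I m (fun _ => (1 : ZMod 2))]

/-- The isometry `V`: the column indexed by `g` is the basis vector `|g, parity_I(g)⟩`. -/
noncomputable def sV {n : ℕ} (I : Finset (Fin n)) (g : Fin n → ZMod 2) :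
    Fin (n + 1) → ZMod 2 :=
  Fin.snoc g (∑ i ∈ I, g i)

noncomputable def isoV {n : ℕ} (I : Finset (Fin n)) :
    Matrix (Fin (n + 1) → ZMod 2) (Fin n → ZMod 2) ℂ :=
  Matrix.of fun f g => if f = sV I g then 1 else 0

lemma sV_cast {n : ℕ} (I : Finset (Fin n)) (g : Fin n → ZMod 2) (j : Fin n) :
    sV I g (Fin.castSucc j) = g j := Fin.snoc_castSucc _ _ _

lemma sV_last {n : ℕ} (I : Finset (Fin n)) (g : Fin n → ZMod 2) :
    sV I g (Fin.last n) = ∑ i ∈ I, g i := Fin.snoc_last _ _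

lemma eq_sV_iff {n : ℕ} (I : Finset (Fin n)) {f : Fin (n + 1) → ZMod 2} {g : Fin n → ZMod 2} :
    f = sV I g ↔ ((fun j => f (Fin.castSucc j)) = g ∧ f (Fin.last n) = ∑ i ∈ I, g i) := by
  constructor
  · rintro rfl; exact ⟨funext (sV_cast I g), sV_last I g⟩
  · rintro ⟨h1, h2⟩
    funext j
    cases j using Fin.lastCases with
    | last => rw [h2, sV_last]
    | cast j => rw [sV_cast]; exact congrFun h1 j

lemma sV_inj {n : ℕ} (I : Finset (Fin n)) : Function.Injective (sV I) := by
  intro g g' h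
  funext j
  have := congrFun h (Fin.castSucc j)
  rwa [sV_cast, sV_cast] at this

lemma cast_eq_of_eq_sV {n : ℕ} (I : Finset (Fin n)) {f : Fin (n + 1) → ZMod 2}
    {g : Fin n → ZMod 2} (h : f = sV I g) : g = fun j => f (Fin.castSucc j) :=
  ((eq_sV_iff I).mp h).1.symm

lemma isoV_conj_mul {n : ℕ} (I : Finset (Fin n)) : (isoV I)ᴴ * isoV I = 1 := by
  ext g g'
  simp only [Matrix.mul_apply, Matrix.conjTranspose_apply, isoV, Matrix.of_apply]
  have h1 : ∀ f, star (if f = sV I g then (1 : ℂ) else 0) * (if f = sV I g' then 1 else 0)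
      = if f = sV I g ∧ f = sV I g' then 1 else 0 := by
    intro f
    by_cases hx : f = sV I g <;> by_cases hy : f = sV I g' <;> simp [hx, hy]
  rw [Finset.sum_congr rfl fun f _ => h1 f, Finset.sum_eq_single (sV I g)]
  · by_cases h : g = g'
    · subst h; simp [Matrix.one_apply]
    · have hne : ¬(sV I g = sV I g ∧ sV I g = sV I g') := fun hc => h (sV_inj I hc.2)
      rw [if_neg hne, Matrix.one_apply_ne h]
  · intro f _ hf
    rw [if_neg]
    rintro ⟨h1, -⟩
    exact hf h1
  · intro h; exact absurd (Finset.mem_univ _) h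

lemma isoV_mul_conj {n : ℕ} (I : Finset (Fin n)) :
    isoV I * (isoV I)ᴴ = (1 / 2 : ℂ) • (1 + stab n I) := by
  ext f f'
  have hL : (isoV I * (isoV I)ᴴ) f f' =
      if f = sV I (fun j => f (Fin.castSucc j)) ∧ f' = sV I (fun j => f (Fin.castSucc j))
      then 1 else 0 := by
    simp only [Matrix.mul_apply, Matrix.conjTranspose_apply, isoV, Matrix.of_apply]
    have h1 : ∀ g, (if f = sV I g then (1 : ℂ) else 0) * star (if f' = sV I g then (1 : ℂ) else 0)
        = if f = sV I g ∧ f' = sV I g then 1 else 0 := by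
      intro g
      by_cases hx : f = sV I g <;> by_cases hy : f' = sV I g <;> simp [hx, hy]
    rw [Finset.sum_congr rfl fun g _ => h1 g, Finset.sum_eq_single (fun j => f (Fin.castSucc j))]
    · intro g _ hg
      rw [if_neg]
      rintro ⟨h1, -⟩
      exact hg (cast_eq_of_eq_sV I h1)
    · intro h; exact absurd (Finset.mem_univ _) h
  have hstab : stab n I f f' =
      (if (fun j => f (Fin.castSucc j)) = (fun j => f' (Fin.castSucc j))
        then chi (∑ i ∈ I, f (Fin.castSucc i)) else 0) *
      (if f (Fin.last n) = f' (Fin.last n) then chi (f (Fin.last n)) else 0) := by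
    simp only [stab, extend, Matrix.of_apply]
    rw [Zstr_apply, Z_apply]
  rw [hL, Matrix.smul_apply, Matrix.add_apply, Matrix.one_apply, hstab]
  by_cases hff : f = f'
  · subst hff
    rw [if_pos rfl, if_pos rfl, if_pos rfl]
    have hiff : ((f = sV I (fun j => f (Fin.castSucc j))) ∧
          (f = sV I (fun j => f (Fin.castSucc j)))) ↔
        (f (Fin.last n) = ∑ i ∈ I, f (Fin.castSucc i)) := by
      rw [and_self, eq_sV_iff]
      exact ⟨fun h => h.2, fun h => ⟨rfl, h⟩⟩
    rw [if_congr hiff rfl rfl, smul_eq_mul, half_lemma]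
  · rw [if_neg hff, if_neg (fun hc => hff (hc.1.trans hc.2.symm))]
    by_cases haa : (fun j => f (Fin.castSucc j)) = (fun j => f' (Fin.castSucc j))
    · have hl : f (Fin.last n) ≠ f' (Fin.last n) := by
        intro hlast
        apply hff
        funext j
        cases j using Fin.lastCases with
        | last => exact hlast
        | cast j => exact congrFun haa j
      rw [if_neg hl]
      simp
    · rw [if_neg haa]
      simp

lemma mu_isoV {n : ℕ} (I : Finset (Fin n)) (k : ℕ) (hk2 : k / 2 < n) :
    mu n I k * isoV I = isoV I * gamma n k := by
  ext f g
  have hL : (mu n I k * isoV I) f g = mu n I k f (sV I g) := by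
    simp only [Matrix.mul_apply, isoV, Matrix.of_apply, mul_ite, mul_one, mul_zero]
    rw [Finset.sum_ite_eq' Finset.univ (sV I g) (fun f' => mu n I k f f'),
      if_pos (Finset.mem_univ _)]
  have hR : (isoV I * gamma n k) f g
      = if f (Fin.last n) = ∑ i ∈ I, f (Fin.castSucc i)
        then gamma n k (fun j => f (Fin.castSucc j)) g else 0 := by
    simp only [Matrix.mul_apply, isoV, Matrix.of_apply, ite_mul, one_mul, zero_mul]
    rw [Finset.sum_eq_single (fun j => f (Fin.castSucc j))]
    · refine if_congr ?_ rfl rfl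
      rw [eq_sV_iff]
      exact ⟨fun h => h.2, fun h => ⟨rfl, h⟩⟩
    · intro g' _ hg'
      rw [if_neg]
      intro h1
      exact hg' (cast_eq_of_eq_sV I h1)
    · intro h; exact absurd (Finset.mem_univ _) h
  rw [hL, hR]
  have hsc : (fun j => sV I g (Fin.castSucc j)) = g := funext (sV_cast I g)
  unfold mu
  rw [dif_pos hk2]
  by_cases hγ : gamma n k (fun j => f (Fin.castSucc j)) g = 0
  · split_ifs <;> simp only [extend, Matrix.of_apply, hsc, hγ, zero_mul, ite_self]
  · have hflip : ∀ j : Fin n, (fun j => f (Fin.castSucc j)) j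
        = g j + if j = (⟨k / 2, hk2⟩ : Fin n) then 1 else 0 := by
      intro j
      by_cases hj : j = (⟨k / 2, hk2⟩ : Fin n)
      · rw [if_pos hj]
        have h2 := gamma_flip hk2 hγ j
        rwa [if_pos (by rw [hj])] at h2
      · rw [if_neg hj, add_zero]
        have h2 := gamma_flip hk2 hγ j
        rwa [if_neg (fun hc => hj (Fin.ext hc)), add_zero] at h2
    have hpar : ∑ i ∈ I, f (Fin.castSucc i)
        = (∑ i ∈ I, g i) + if (⟨k / 2, hk2⟩ : Fin n) ∈ I then 1 else 0 :=
      sum_flip I _ hflip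
    by_cases hmI : (⟨k / 2, hk2⟩ : Fin n) ∈ I
    · rw [if_pos hmI]
      simp only [extend, Matrix.of_apply, hsc]
      rw [sV_last, X_apply, hpar, if_pos hmI, mul_comm, ite_mul, one_mul, zero_mul]
    · rw [if_neg hmI]
      simp only [extend, Matrix.of_apply, hsc]
      rw [sV_last, one_apply', hpar, if_neg hmI, add_zero, mul_comm, ite_mul, one_mul, zero_mul]

/-- there is a linear isometry `V : ℂ^(2^n) → ℂ^(2^(n+1))` with
`V† V = I`, `V V† = ½(I + S)` (the projector onto the `+1` eigenspace of the stabilizer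
`S = Z_I ⊗ Z`), and `μ_k V = V Γ_k` for all `k < 2n`; i.e. the `+1` eigenspace of `S` is
`2^n`-dimensional, invariant under every `μ_k`, and on it the `μ_k` realize a copy of the
Jordan–Wigner Majorana operators. -/
theorem ancilla_mapping_exists (n : ℕ) (hn : 1 ≤ n) (I : Finset (Fin n)) :
    ∃ V : Matrix (Fin (n + 1) → ZMod 2) (Fin n → ZMod 2) ℂ,
      Vᴴ * V = 1 ∧
      V * Vᴴ = (1 / 2 : ℂ) • (1 + stab n I) ∧
      ∀ k, k < 2 * n → mu n I k * V = V * gamma n k := by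
  exact ⟨isoV I, isoV_conj_mul I, isoV_mul_conj I, fun k hk => mu_isoV I k (by omega)⟩

end FQ
end
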